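/- Let G = (V, D, B) be a mixed graph on n vertices with edge-indeterminate matrices Λ (supported on D) and Ω (supported on B ∪ diagonal), and let Σ = (I − Λ)⁻ᵀ Ω (I − Λ)⁻¹ where (I − Λ)⁻¹ is interpreted as the formal power series I + Σ_{k≥1} Λᵏ. Then for all vertices v, w, the entry Σ_{vw} equals the sum over all treks π from v to w of the trek monomial π(Λ,Ω). -/

import Mathlib

open scoped BigOperators

/-- A mixed graph on `n` vertices: directed edges `D` and symmetric bidirected
edges `B`, with no self-loops. -/
structure MixedGraph (n : ℕ) where
  D : Fin n → Fin n → Prop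
  B : Fin n → Fin n → Prop
  B_symm : ∀ i j, B i j → B j i
  D_irrefl : ∀ i, ¬ D i i
  B_irrefl : ∀ i, ¬ B i i

namespace MixedGraph

variable {n : ℕ}

/-- A trek from `v` to `w` in a mixed graph: a walk with no colliding arrowheads,
consisting of a left-hand side `L 0 = v, L 1, …, L p` (each step along a directed
edge `L (i+1) → L i`, traversed backwards from `v` up to the top `L p`),
then either (`bid = true`) one bidirected edge `L p ↔ R 0`, or (`bid = false`)
`L p = R 0`, and a right-hand side `R 0, …, R q = w` walking forwards along
directed edges `R j → R (j+1)`.  Vertices may repeat (treks are walks). -/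
structure Trek (G : MixedGraph n) (v w : Fin n) where
  p : ℕ
  q : ℕ
  L : Fin (p + 1) → Fin n
  R : Fin (q + 1) → Fin n
  hL : ∀ i : Fin p, G.D (L i.succ) (L i.castSucc)
  hR : ∀ i : Fin q, G.D (R i.castSucc) (R i.succ)
  bid : Bool
  hconn : if bid then G.B (L (Fin.last p)) (R 0) else L (Fin.last p) = R 0
  hv : L 0 = v
  hw : R (Fin.last q) = w

namespace Trek

variable {G : MixedGraph n} {v w : Fin n}

/-- The vertices on the left-hand side of a trek (including the top). -/
def leftVerts (π : Trek G v w) : Set (Fin n) := Set.range π.L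

/-- The vertices on the right-hand side of a trek (including the top). -/
def rightVerts (π : Trek G v w) : Set (Fin n) := Set.range π.R

/-- The trek monomial of a trek, with respect to parameter matrices
`lam` (directed edge coefficients) and `om` (error covariances):
`ω_{top-left, top-right} ∏ λ_{x y}` over all directed edges of the trek. -/
def monom {R' : Type*} [CommSemiring R'] (lam om : Fin n → Fin n → R')
    (π : Trek G v w) : R' :=
  om (π.L (Fin.last π.p)) (π.R 0)
    * (∏ i : Fin π.p, lam (π.L i.succ) (π.L i.castSucc))
    * ∏ i : Fin π.q, lam (π.R i.castSucc) (π.R i.succ)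

/-- A half-trek is a trek whose left-hand side consists of a single vertex. -/
def IsHalfTrek (π : Trek G v w) : Prop := π.p = 0

/-- The trek uses the directed edge `a → b` on its left-hand side. -/
def usesLeft (π : Trek G v w) (a b : Fin n) : Prop :=
  ∃ i : Fin π.p, π.L i.succ = a ∧ π.L i.castSucc = b

/-- The trek uses the directed edge `a → b` on its right-hand side. -/
def usesRight (π : Trek G v w) (a b : Fin n) : Prop :=
  ∃ i : Fin π.q, π.R i.castSucc = a ∧ π.R i.succ = b

/-- The trek is non-empty (uses at least one edge). -/
def Nonemp (π : Trek G v w) : Prop := 0 < π.p ∨ 0 < π.q ∨ π.bid = true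

end Trek

/-- `w` is trek reachable from `v`: there is a non-empty trek from `v` to `w`. -/
def tr (G : MixedGraph n) (v w : Fin n) : Prop :=
  ∃ π : Trek G v w, π.Nonemp

/-- `w` is half-trek reachable from `v`. -/
def htr (G : MixedGraph n) (v w : Fin n) : Prop :=
  ∃ π : Trek G v w, π.IsHalfTrek ∧ π.Nonemp

/-- `w` is a descendant of `v` (non-empty directed path from `v` to `w`). -/
def des (G : MixedGraph n) (v w : Fin n) : Prop :=
  Relation.TransGen G.D v w

/-- The parents of `w`. -/
def pa (G : MixedGraph n) (w : Fin n) : Set (Fin n) := {z | G.D z w}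

/-- The siblings of `w`. -/
def sib (G : MixedGraph n) (w : Fin n) : Set (Fin n) := {z | G.B z w}

end MixedGraph

/-! ### STATEMENT 0: the Trek Rule -/

open Matrix MixedGraph MvPowerSeries

/-- Coefficientwise (product) topology on multivariate formal power series. -/
noncomputable instance mvPowerSeriesTop (σ : Type*) : TopologicalSpace (MvPowerSeries σ ℚ) :=
  Pi.topologicalSpace

namespace TrekAux

open MvPowerSeries Function

abbrev PSn (n : ℕ) := MvPowerSeries ((Fin n × Fin n) ⊕ (Fin n × Fin n)) ℚ

/-- total degree of an exponent -/
def deg {σ : Type*} (d : σ →₀ ℕ) : ℕ := d.sum fun _ k => k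

lemma deg_add {σ : Type*} (a b : σ →₀ ℕ) : deg (a + b) = deg a + deg b :=
  Finsupp.sum_add_index' (fun _ => rfl) (fun _ _ _ => rfl)

lemma deg_single {σ : Type*} (s : σ) (k : ℕ) : deg (Finsupp.single s k) = k :=
  Finsupp.sum_single_index rfl

lemma deg_sum {ι σ : Type*} (s : Finset ι) (e : ι → (σ →₀ ℕ)) :
    deg (∑ i ∈ s, e i) = ∑ i ∈ s, deg (e i) := by
  classical
  induction s using Finset.cons_induction with
  | empty => simp [deg]
  | cons i s hi ih => rw [Finset.sum_cons, Finset.sum_cons, deg_add, ih]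

lemma hasSum_coeff_iff {σ ι : Type*} {f : ι → MvPowerSeries σ ℚ} {S : MvPowerSeries σ ℚ} :
    HasSum f S ↔ ∀ d, HasSum (fun i => coeff d (f i)) (coeff d S) := by
  simp only [coeff_apply]
  exact Pi.hasSum

lemma prod_X {σ ι : Type*} [DecidableEq σ] (s : Finset ι) (e : ι → σ) :
    (∏ i ∈ s, (X (e i) : MvPowerSeries σ ℚ)) =
      monomial (∑ i ∈ s, Finsupp.single (e i) 1) 1 := by
  induction s using Finset.cons_induction with
  | empty => simp
  | cons i s hi ih =>
      rw [Finset.prod_cons, Finset.sum_cons, ih, X_def, monomial_mul_monomial, one_mul]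

lemma coeff_mul_ne_zero {σ : Type*} [DecidableEq σ] {a b : MvPowerSeries σ ℚ}
    {d : σ →₀ ℕ} (h : coeff d (a * b) ≠ 0) :
    ∃ d1 d2, d1 + d2 = d ∧ coeff d1 a ≠ 0 ∧ coeff d2 b ≠ 0 := by
  rw [coeff_mul] at h
  obtain ⟨ab, hmem, hne⟩ := Finset.exists_ne_zero_of_sum_ne_zero h
  exact ⟨ab.1, ab.2, Finset.HasAntidiagonal.mem_antidiagonal.mp hmem,
    left_ne_zero_of_mul hne, right_ne_zero_of_mul hne⟩

lemma hasSum_sigma_ps {σ : Type*} {β : Type*} {γ : β → Type*}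
    {f : (Σ b, γ b) → MvPowerSeries σ ℚ} {g : β → MvPowerSeries σ ℚ} {S : MvPowerSeries σ ℚ}
    (hfin : ∀ d, (Function.support fun x => coeff d (f x)).Finite)
    (hgfin : ∀ d, (Function.support fun b => coeff d (g b)).Finite)
    (h : ∀ b, HasSum (fun c => f ⟨b, c⟩) (g b)) (hg : HasSum g S) : HasSum f S := by
  classical
  rw [hasSum_coeff_iff]
  intro d
  have hfib : ∀ b, (Function.support fun c => coeff d (f ⟨b, c⟩)).Finite := by
    intro b
    exact ((hfin d).preimage (Set.injOn_of_injective sigma_mk_injective)).subset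
      (fun c hc => hc)
  set sf : Finset (Σ b, γ b) := (hfin d).toFinset with hsf
  set sg : Finset β := (hgfin d).toFinset with hsg
  set B : Finset β := sf.image Sigma.fst ∪ sg with hB
  set fib : ∀ b, Finset (γ b) := fun b => (hfib b).toFinset with hfibdef
  have hgb : ∀ b, coeff d (g b) = ∑ c ∈ fib b, coeff d (f ⟨b, c⟩) := by
    intro b
    refine (hasSum_coeff_iff.mp (h b) d).unique (hasSum_sum_of_ne_finset_zero ?_)
    intro c hc
    by_contra hne
    exact hc ((hfib b).mem_toFinset.mpr hne)
  have hsum : HasSum (fun x => coeff d (f x)) (∑ x ∈ sf, coeff d (f x)) := by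
    apply hasSum_sum_of_ne_finset_zero
    intro x hx
    by_contra hne
    exact hx ((hfin d).mem_toFinset.mpr hne)
  have key : ∑ x ∈ sf, coeff d (f x) = coeff d S := by
    have hsub : sf ⊆ B.sigma fib := by
      intro x hx
      rw [Finset.mem_sigma]
      refine ⟨Finset.mem_union_left _ (Finset.mem_image_of_mem _ hx), ?_⟩
      have hne : coeff d (f x) ≠ 0 := (hfin d).mem_toFinset.mp hx
      refine (hfib x.1).mem_toFinset.mpr ?_
      show coeff d (f ⟨x.1, x.2⟩) ≠ 0
      rwa [Sigma.eta]
    have h1 : ∑ x ∈ sf, coeff d (f x) = ∑ x ∈ B.sigma fib, coeff d (f x) := by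
      refine Finset.sum_subset hsub ?_
      intro x _ hx
      by_contra hne
      exact hx ((hfin d).mem_toFinset.mpr hne)
    rw [h1, Finset.sum_sigma]
    have h2 : ∀ b ∈ B, (∑ c ∈ fib b, coeff d (f ⟨b, c⟩)) = coeff d (g b) :=
      fun b _ => (hgb b).symm
    rw [Finset.sum_congr rfl h2]
    have h3 : ∑ b ∈ B, coeff d (g b) = ∑ b ∈ sg, coeff d (g b) := by
      refine (Finset.sum_subset Finset.subset_union_right ?_).symm
      intro b _ hb
      by_contra hne
      exact hb ((hgfin d).mem_toFinset.mpr hne)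
    rw [h3]
    refine ((hasSum_coeff_iff.mp hg d).unique (hasSum_sum_of_ne_finset_zero ?_)).symm
    intro b hb
    by_contra hne
    exact hb ((hgfin d).mem_toFinset.mpr hne)
  rwa [key] at hsum

lemma hasSum_mul_ps {σ : Type*} [DecidableEq σ] {ι κ : Type*}
    {f : ι → MvPowerSeries σ ℚ} {g : κ → MvPowerSeries σ ℚ} {S T : MvPowerSeries σ ℚ}
    (hffin : ∀ d, (Function.support fun i => coeff d (f i)).Finite)
    (hgfin : ∀ d, (Function.support fun k => coeff d (g k)).Finite)
    (hf : HasSum f S) (hg : HasSum g T) :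
    HasSum (fun x : ι × κ => f x.1 * g x.2) (S * T) := by
  rw [hasSum_coeff_iff]
  intro d
  simp only [coeff_mul]
  apply hasSum_sum
  intro ab _
  have hSa : coeff ab.1 S = ∑ i ∈ (hffin ab.1).toFinset, coeff ab.1 (f i) := by
    refine (hasSum_coeff_iff.mp hf ab.1).unique (hasSum_sum_of_ne_finset_zero ?_)
    intro i hi; by_contra hne; exact hi ((hffin ab.1).mem_toFinset.mpr hne)
  have hTb : coeff ab.2 T = ∑ k ∈ (hgfin ab.2).toFinset, coeff ab.2 (g k) := by
    refine (hasSum_coeff_iff.mp hg ab.2).unique (hasSum_sum_of_ne_finset_zero ?_)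
    intro k hk; by_contra hne; exact hk ((hgfin ab.2).mem_toFinset.mpr hne)
  rw [hSa, hTb, Finset.sum_mul_sum]
  have := hasSum_sum_of_ne_finset_zero
    (s := (hffin ab.1).toFinset ×ˢ (hgfin ab.2).toFinset)
    (f := fun x : ι × κ => coeff ab.1 (f x.1) * coeff ab.2 (g x.2))
    (L := SummationFilter.unconditional (ι × κ)) ?_
  · rwa [Finset.sum_product] at this
  · intro x hx
    rw [Finset.mem_product] at hx
    push_neg at hx
    by_cases h1 : x.1 ∈ (hffin ab.1).toFinset
    · have h2 := hx h1
      have : coeff ab.2 (g x.2) = 0 := by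
        by_contra hne; exact h2 ((hgfin ab.2).mem_toFinset.mpr hne)
      simp only [this, mul_zero]
    · have : coeff ab.1 (f x.1) = 0 := by
        by_contra hne; exact h1 ((hffin ab.1).mem_toFinset.mpr hne)
      simp only [this, zero_mul]

lemma hasSum_const_mul_ps {σ : Type*} [DecidableEq σ] {ι : Type*} (c : MvPowerSeries σ ℚ)
    {f : ι → MvPowerSeries σ ℚ} {S : MvPowerSeries σ ℚ} (hf : HasSum f S) :
    HasSum (fun i => c * f i) (c * S) := by
  rw [hasSum_coeff_iff] at hf ⊢
  intro d
  simp only [coeff_mul]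
  apply hasSum_sum
  intro ab _
  exact (hf ab.2).mul_left _

/-! ### Walks -/

def Walk (n : ℕ) (a b : Fin n) : Type :=
  Σ p : ℕ, {f : Fin (p + 1) → Fin n // f 0 = a ∧ f (Fin.last p) = b}

variable {n : ℕ}

/-- weight of the left-hand side of a trek: a walk from `v` up to the top `u`. -/
noncomputable def wtL (Lam : Matrix (Fin n) (Fin n) (PSn n)) {u v : Fin n} (W : Walk n v u) : PSn n :=
  ∏ i : Fin W.1, Lam (W.2.1 i.succ) (W.2.1 i.castSucc)

/-- weight of the right-hand side of a trek: a walk from the top `z` down to `w`. -/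
noncomputable def wtR (Lam : Matrix (Fin n) (Fin n) (PSn n)) {z w : Fin n} (W : Walk n z w) : PSn n :=
  ∏ i : Fin W.1, Lam (W.2.1 i.castSucc) (W.2.1 i.succ)

lemma walk_finite (a b : Fin n) (N : ℕ) : {W : Walk n a b | W.1 ≤ N}.Finite := by
  have himg : ((fun W : Walk n a b => List.ofFn W.2.1) '' {W | W.1 ≤ N}).Finite := by
    refine (List.finite_length_le (Fin n) (N + 1)).subset ?_
    rintro l ⟨W, hW, rfl⟩
    simpa using Nat.succ_le_succ hW
  refine Set.Finite.of_finite_image himg ?_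
  rintro ⟨p1, f1, hf1⟩ - ⟨p2, f2, hf2⟩ - h
  have hp : p1 = p2 := by
    have hlen := congrArg List.length h
    simpa using hlen
  subst hp
  have hf : f1 = f2 := List.ofFn_injective h
  subst hf
  rfl

section Graph

variable [DecidableEq (Fin n)]

lemma pow_entry_L (Lam : Matrix (Fin n) (Fin n) (PSn n)) (p : ℕ) (u v : Fin n) :
    (Lam ^ p) u v = ∑ f : Fin (p + 1) → Fin n,
      if f 0 = v ∧ f (Fin.last p) = u then
        ∏ i : Fin p, Lam (f i.succ) (f i.castSucc) else 0 := by
  induction p generalizing u v with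
  | zero =>
    rw [pow_zero, Matrix.one_apply]
    rcases eq_or_ne u v with rfl | hne
    · rw [if_pos rfl]
      rw [Finset.sum_eq_single (fun _ => u : Fin 1 → Fin n)]
      · simp
      · intro f _ hfne
        refine if_neg ?_
        rintro ⟨h1, h2⟩
        apply hfne
        funext i
        have hi : i = 0 := Subsingleton.elim _ _
        rw [hi]
        exact h2
      · intro hmem
        exact absurd (Finset.mem_univ _) hmem
    · rw [if_neg hne]
      refine (Finset.sum_eq_zero ?_).symm
      intro f _
      refine if_neg ?_
      rintro ⟨h1, h2⟩
      exact hne (h2.symm.trans h1)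
  | succ p ih =>
    rw [pow_succ, Matrix.mul_apply]
    have hce : ∀ (x : Fin n) (g : Fin (p + 1) → Fin n),
        (Fin.consEquiv fun _ : Fin (p + 2) => Fin n) (x, g) = Fin.cons x g := fun _ _ => rfl
    trans (∑ g : Fin (p + 1) → Fin n, if g (Fin.last p) = u then
        Lam (g 0) v * ∏ i : Fin p, Lam (g i.succ) (g i.castSucc) else 0)
    · simp only [ih, Finset.sum_mul, ite_mul, zero_mul]
      rw [Finset.sum_comm]
      refine Finset.sum_congr rfl fun g _ => ?_
      simp only [ite_and]
      rw [Finset.sum_ite_eq]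
      simp only [Finset.mem_univ, if_true]
      by_cases hg : g (Fin.last p) = u
      · rw [if_pos hg, if_pos hg, mul_comm]
      · rw [if_neg hg, if_neg hg]
    · rw [← Equiv.sum_comp (Fin.consEquiv fun _ : Fin (p + 2) => Fin n), Fintype.sum_prod_type,
        Finset.sum_comm]
      refine Finset.sum_congr rfl fun g _ => ?_
      simp only [hce, Fin.cons_zero, ← Fin.succ_last, Fin.cons_succ, Fin.prod_univ_succ,
        Fin.castSucc_zero, ← Fin.succ_castSucc]
      simp only [ite_and, Finset.sum_ite_eq', Finset.mem_univ, if_true]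

end Graph

section Graph2

variable [DecidableEq (Fin n)]

lemma pow_entry_R (Lam : Matrix (Fin n) (Fin n) (PSn n)) (q : ℕ) (z w : Fin n) :
    (Lam ^ q) z w = ∑ f : Fin (q + 1) → Fin n,
      if f 0 = z ∧ f (Fin.last q) = w then
        ∏ i : Fin q, Lam (f i.castSucc) (f i.succ) else 0 := by
  induction q generalizing z w with
  | zero =>
    rw [pow_zero, Matrix.one_apply]
    rcases eq_or_ne z w with rfl | hne
    · rw [if_pos rfl]
      rw [Finset.sum_eq_single (fun _ => z : Fin 1 → Fin n)]
      · simp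
      · intro f _ hfne
        refine if_neg ?_
        rintro ⟨h1, h2⟩
        apply hfne
        funext i
        have hi : i = 0 := Subsingleton.elim _ _
        rw [hi]
        exact h1
      · intro hmem
        exact absurd (Finset.mem_univ _) hmem
    · rw [if_neg hne]
      refine (Finset.sum_eq_zero ?_).symm
      intro f _
      refine if_neg ?_
      rintro ⟨h1, h2⟩
      exact hne (h1.symm.trans h2)
  | succ q ih =>
    rw [pow_succ', Matrix.mul_apply]
    have hce : ∀ (x : Fin n) (g : Fin (q + 1) → Fin n),
        (Fin.consEquiv fun _ : Fin (q + 2) => Fin n) (x, g) = Fin.cons x g := fun _ _ => rfl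
    trans (∑ g : Fin (q + 1) → Fin n, if g (Fin.last q) = w then
        Lam z (g 0) * ∏ i : Fin q, Lam (g i.castSucc) (g i.succ) else 0)
    · simp only [ih, Finset.mul_sum, mul_ite, mul_zero]
      rw [Finset.sum_comm]
      refine Finset.sum_congr rfl fun g _ => ?_
      simp only [ite_and]
      rw [Finset.sum_ite_eq]
      simp only [Finset.mem_univ, if_true]
    · rw [← Equiv.sum_comp (Fin.consEquiv fun _ : Fin (q + 2) => Fin n), Fintype.sum_prod_type,
        Finset.sum_comm]
      refine Finset.sum_congr rfl fun g _ => ?_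
      simp only [hce, Fin.cons_zero, ← Fin.succ_last, Fin.cons_succ, Fin.prod_univ_succ,
        Fin.castSucc_zero, ← Fin.succ_castSucc]
      simp only [ite_and, Finset.sum_ite_eq', Finset.mem_univ, if_true]

end Graph2

end TrekAux

set_option linter.unusedSectionVars false

namespace TrekAux

open MvPowerSeries Function MixedGraph

variable {n : ℕ} [DecidableEq (Fin n)]

section WithGraph

variable (G : MixedGraph n) [DecidableRel G.D]
variable (Lam : Matrix (Fin n) (Fin n) (PSn n))
variable (hLam : ∀ i j, Lam i j = if G.D i j then MvPowerSeries.X (Sum.inl (i, j)) else 0)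

include G hLam

lemma coeff_wtL_ne {u v : Fin n} (W : Walk n v u) (d : ((Fin n × Fin n) ⊕ (Fin n × Fin n)) →₀ ℕ)
    (h : coeff d (wtL Lam W) ≠ 0) : deg d = W.1 := by
  by_cases hall : ∀ i : Fin W.1, G.D (W.2.1 i.succ) (W.2.1 i.castSucc)
  · have hwt : wtL Lam W = monomial
        (∑ i : Fin W.1, Finsupp.single
          (Sum.inl (W.2.1 i.succ, W.2.1 i.castSucc) : (Fin n × Fin n) ⊕ (Fin n × Fin n)) 1) 1 := by
      refine Eq.trans (Finset.prod_congr rfl fun i _ => ?_) (prod_X _ _)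
      rw [hLam, if_pos (hall i)]
    rw [hwt, coeff_monomial] at h
    by_cases hd : d = ∑ i : Fin W.1, Finsupp.single
        (Sum.inl (W.2.1 i.succ, W.2.1 i.castSucc) : (Fin n × Fin n) ⊕ (Fin n × Fin n)) 1
    · rw [hd, deg_sum]
      simp [deg_single]
    · rw [if_neg hd] at h
      exact absurd rfl h
  · push_neg at hall
    obtain ⟨i, hi⟩ := hall
    have h0 : wtL Lam W = 0 :=
      Finset.prod_eq_zero (Finset.mem_univ i) (by rw [hLam, if_neg hi])
    rw [h0] at h
    simp at h

lemma coeff_wtR_ne {z w : Fin n} (W : Walk n z w) (d : ((Fin n × Fin n) ⊕ (Fin n × Fin n)) →₀ ℕ)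
    (h : coeff d (wtR Lam W) ≠ 0) : deg d = W.1 := by
  by_cases hall : ∀ i : Fin W.1, G.D (W.2.1 i.castSucc) (W.2.1 i.succ)
  · have hwt : wtR Lam W = monomial
        (∑ i : Fin W.1, Finsupp.single
          (Sum.inl (W.2.1 i.castSucc, W.2.1 i.succ) : (Fin n × Fin n) ⊕ (Fin n × Fin n)) 1) 1 := by
      refine Eq.trans (Finset.prod_congr rfl fun i _ => ?_) (prod_X _ _)
      rw [hLam, if_pos (hall i)]
    rw [hwt, coeff_monomial] at h
    by_cases hd : d = ∑ i : Fin W.1, Finsupp.single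
        (Sum.inl (W.2.1 i.castSucc, W.2.1 i.succ) : (Fin n × Fin n) ⊕ (Fin n × Fin n)) 1
    · rw [hd, deg_sum]
      simp [deg_single]
    · rw [if_neg hd] at h
      exact absurd rfl h
  · push_neg at hall
    obtain ⟨i, hi⟩ := hall
    have h0 : wtR Lam W = 0 :=
      Finset.prod_eq_zero (Finset.mem_univ i) (by rw [hLam, if_neg hi])
    rw [h0] at h
    simp at h

lemma fin_wtL (u v : Fin n) (d : ((Fin n × Fin n) ⊕ (Fin n × Fin n)) →₀ ℕ) :
    (Function.support fun W : Walk n v u => coeff d (wtL Lam W)).Finite :=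
  (walk_finite v u (deg d)).subset fun W hW =>
    le_of_eq (coeff_wtL_ne G Lam hLam W d hW).symm

lemma fin_wtR (z w : Fin n) (d : ((Fin n × Fin n) ⊕ (Fin n × Fin n)) →₀ ℕ) :
    (Function.support fun W : Walk n z w => coeff d (wtR Lam W)).Finite :=
  (walk_finite z w (deg d)).subset fun W hW =>
    le_of_eq (coeff_wtR_ne G Lam hLam W d hW).symm

lemma coeff_powL_ne (p : ℕ) (u v : Fin n) (d : ((Fin n × Fin n) ⊕ (Fin n × Fin n)) →₀ ℕ)
    (h : coeff d ((Lam ^ p) u v) ≠ 0) : deg d = p := by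
  rw [pow_entry_L Lam p u v, map_sum] at h
  obtain ⟨f, _, hf⟩ := Finset.exists_ne_zero_of_sum_ne_zero h
  by_cases hc : f 0 = v ∧ f (Fin.last p) = u
  · rw [if_pos hc] at hf
    exact coeff_wtL_ne G Lam hLam ⟨p, f, hc⟩ d hf
  · rw [if_neg hc] at hf
    simp at hf

lemma coeff_powR_ne (q : ℕ) (z w : Fin n) (d : ((Fin n × Fin n) ⊕ (Fin n × Fin n)) →₀ ℕ)
    (h : coeff d ((Lam ^ q) z w) ≠ 0) : deg d = q := by
  rw [pow_entry_R Lam q z w, map_sum] at h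
  obtain ⟨f, _, hf⟩ := Finset.exists_ne_zero_of_sum_ne_zero h
  by_cases hc : f 0 = z ∧ f (Fin.last q) = w
  · rw [if_pos hc] at hf
    exact coeff_wtR_ne G Lam hLam ⟨q, f, hc⟩ d hf
  · rw [if_neg hc] at hf
    simp at hf

lemma hasSum_walkL (A : Matrix (Fin n) (Fin n) (PSn n))
    (hA : ∀ i j, HasSum (fun k : ℕ => (Lam ^ k) i j) (A i j)) (u v : Fin n) :
    HasSum (fun W : Walk n v u => wtL Lam W) (A u v) := by
  refine hasSum_sigma_ps (g := fun k : ℕ => (Lam ^ k) u v) (fin_wtL G Lam hLam u v)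
    ?_ ?_ (hA u v)
  · intro d
    refine (Set.finite_singleton (deg d)).subset fun p hp => ?_
    exact Set.mem_singleton_iff.mpr (coeff_powL_ne G Lam hLam p u v d hp).symm
  · intro p
    have h2 : (Lam ^ p) u v
        = ∑ c : {f : Fin (p + 1) → Fin n // f 0 = v ∧ f (Fin.last p) = u},
            wtL Lam ⟨p, c⟩ := by
      rw [pow_entry_L, ← Finset.sum_filter]
      exact Finset.sum_subtype _ (fun x => by simp) _
    show HasSum (fun c => wtL Lam ⟨p, c⟩) ((Lam ^ p) u v)
    rw [h2]
    exact hasSum_fintype _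

lemma hasSum_walkR (A : Matrix (Fin n) (Fin n) (PSn n))
    (hA : ∀ i j, HasSum (fun k : ℕ => (Lam ^ k) i j) (A i j)) (z w : Fin n) :
    HasSum (fun W : Walk n z w => wtR Lam W) (A z w) := by
  refine hasSum_sigma_ps (g := fun k : ℕ => (Lam ^ k) z w) (fin_wtR G Lam hLam z w)
    ?_ ?_ (hA z w)
  · intro d
    refine (Set.finite_singleton (deg d)).subset fun q hq => ?_
    exact Set.mem_singleton_iff.mpr (coeff_powR_ne G Lam hLam q z w d hq).symm
  · intro q
    have h2 : (Lam ^ q) z w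
        = ∑ c : {f : Fin (q + 1) → Fin n // f 0 = z ∧ f (Fin.last q) = w},
            wtR Lam ⟨q, c⟩ := by
      rw [pow_entry_R, ← Finset.sum_filter]
      exact Finset.sum_subtype _ (fun x => by simp) _
    show HasSum (fun c => wtR Lam ⟨q, c⟩) ((Lam ^ q) z w)
    rw [h2]
    exact hasSum_fintype _

end WithGraph

/-- combined index type: a top pair together with a left and a right walk -/
def Jty (n : ℕ) (v w : Fin n) : Type :=
  Σ uz : Fin n × Fin n, Walk n v uz.1 × Walk n uz.2 w

/-- the summand attached to an index -/
noncomputable def Fm (Lam Om : Matrix (Fin n) (Fin n) (PSn n))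
    {v w : Fin n} (x : Jty n v w) : PSn n :=
  Om x.1.1 x.1.2 * wtL Lam x.2.1 * wtR Lam x.2.2

/-- the natural map from treks to combined indices -/
def Φ (G : MixedGraph n) {v w : Fin n} (π : Trek G v w) : Jty n v w :=
  ⟨(π.L (Fin.last π.p), π.R 0), ⟨π.p, π.L, π.hv, rfl⟩, ⟨π.q, π.R, rfl, π.hw⟩⟩

lemma Φ_inj (G : MixedGraph n) {v w : Fin n} :
    Function.Injective (Φ G (v := v) (w := w)) := by
  intro π1 π2 h
  have h' : (((π1.L (Fin.last π1.p), π1.R 0) : Fin n × Fin n),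
      (⟨π1.p, π1.L⟩ : Σ p, (Fin (p + 1) → Fin n)),
      (⟨π1.q, π1.R⟩ : Σ q, (Fin (q + 1) → Fin n))) =
      ((π2.L (Fin.last π2.p), π2.R 0), ⟨π2.p, π2.L⟩, ⟨π2.q, π2.R⟩) :=
    congrArg (fun x : Jty n v w =>
      ((x.1 : Fin n × Fin n), (⟨x.2.1.1, x.2.1.2.1⟩ : Σ p, (Fin (p + 1) → Fin n)),
        (⟨x.2.2.1, x.2.2.2.1⟩ : Σ q, (Fin (q + 1) → Fin n)))) h
  rcases π1 with ⟨p1, q1, L1, R1, hL1, hR1, b1, hc1, hv1, hw1⟩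
  rcases π2 with ⟨p2, q2, L2, R2, hL2, hR2, b2, hc2, hv2, hw2⟩
  simp only [Prod.mk.injEq, Sigma.mk.inj_iff] at h'
  obtain ⟨⟨htop, hr0⟩, ⟨hp, hLL⟩, hq, hRR⟩ := h'
  subst hp
  subst hq
  have hLe : L1 = L2 := eq_of_heq hLL
  subst hLe
  have hRe : R1 = R2 := eq_of_heq hRR
  subst hRe
  have hb : b1 = b2 := by
    cases b1 <;> cases b2
    · rfl
    · exfalso
      simp only [Bool.false_eq_true, if_false, if_true] at hc1 hc2
      rw [hc1] at hc2
      exact G.B_irrefl _ hc2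
    · exfalso
      simp only [Bool.false_eq_true, if_false, if_true] at hc1 hc2
      rw [hc2] at hc1
      exact G.B_irrefl _ hc1
    · rfl
  subst hb
  rfl

lemma Fm_mem_range (G : MixedGraph n) [DecidableRel G.D] [DecidableRel G.B]
    (Lam Om : Matrix (Fin n) (Fin n) (PSn n))
    (hLam : ∀ i j, Lam i j = if G.D i j then MvPowerSeries.X (Sum.inl (i, j)) else 0)
    (hOm : ∀ i j, Om i j = if i = j ∨ G.B i j then MvPowerSeries.X (Sum.inr (i, j)) else 0)
    {v w : Fin n} (x : Jty n v w) (hF : Fm Lam Om x ≠ 0) :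
    x ∈ Set.range (Φ G (v := v) (w := w)) := by
  obtain ⟨⟨u, z⟩, ⟨p, f, hf⟩, ⟨q, g, hg⟩⟩ := x
  have hfl := hf.2
  have hg0 := hg.1
  subst hfl
  subst hg0
  simp only [Fm] at hF
  have h1 := left_ne_zero_of_mul hF
  have hOmne := left_ne_zero_of_mul h1
  have hLne := right_ne_zero_of_mul h1
  have hRne := right_ne_zero_of_mul hF
  have hcon : f (Fin.last p) = g 0 ∨ G.B (f (Fin.last p)) (g 0) := by
    by_contra hc
    apply hOmne
    rw [hOm, if_neg hc]
  have hLs : ∀ i : Fin p, G.D (f i.succ) (f i.castSucc) := by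
    intro i
    by_contra hd
    exact hLne (Finset.prod_eq_zero (Finset.mem_univ i) (by rw [hLam, if_neg hd]))
  have hRs : ∀ i : Fin q, G.D (g i.castSucc) (g i.succ) := by
    intro i
    by_contra hd
    exact hRne (Finset.prod_eq_zero (Finset.mem_univ i) (by rw [hLam, if_neg hd]))
  rcases hcon with heq | hB
  · exact ⟨⟨p, q, f, g, hLs, hRs, false, heq, hf.1, hg.2⟩, rfl⟩
  · exact ⟨⟨p, q, f, g, hLs, hRs, true, hB, hf.1, hg.2⟩, rfl⟩

lemma fin_Fm (G : MixedGraph n) [DecidableRel G.D]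
    (Lam Om : Matrix (Fin n) (Fin n) (PSn n))
    (hLam : ∀ i j, Lam i j = if G.D i j then MvPowerSeries.X (Sum.inl (i, j)) else 0)
    {v w : Fin n} (d : ((Fin n × Fin n) ⊕ (Fin n × Fin n)) →₀ ℕ) :
    (Function.support fun x : Jty n v w => coeff d (Fm Lam Om x)).Finite := by
  have hbig : (⋃ uz ∈ (Set.univ : Set (Fin n × Fin n)), Sigma.mk uz ''
      ({W : Walk n v uz.1 | W.1 ≤ deg d} ×ˢ {W : Walk n uz.2 w | W.1 ≤ deg d})).Finite := by
    refine Set.Finite.biUnion Set.finite_univ fun uz _ => ?_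
    exact ((walk_finite v uz.1 (deg d)).prod (walk_finite uz.2 w (deg d))).image _
  refine hbig.subset ?_
  intro x hx
  have hx' : coeff d (Om x.1.1 x.1.2 * wtL Lam x.2.1 * wtR Lam x.2.2) ≠ 0 := hx
  obtain ⟨d1, d2, hsum12, h1, h2⟩ := coeff_mul_ne_zero hx'
  obtain ⟨d3, d4, hsum34, _, h4⟩ := coeff_mul_ne_zero h1
  have e1 : x.2.1.1 = deg d4 := (coeff_wtL_ne G Lam hLam x.2.1 d4 h4).symm
  have e2 : x.2.2.1 = deg d2 := (coeff_wtR_ne G Lam hLam x.2.2 d2 h2).symm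
  have hdeg : deg d4 + deg d2 ≤ deg d := by
    have hd12 : deg d1 + deg d2 = deg d := by rw [← deg_add, hsum12]
    have hd34 : deg d3 + deg d4 = deg d1 := by rw [← deg_add, hsum34]
    omega
  refine Set.mem_biUnion (Set.mem_univ x.1) ?_
  refine ⟨x.2, ⟨?_, ?_⟩, rfl⟩
  · show x.2.1.1 ≤ deg d
    omega
  · show x.2.2.1 ≤ deg d
    omega

end TrekAux

/-- **The Trek Rule.**  Let `G` be a mixed graph on `n` vertices with
indeterminate matrices `Λ` (supported on the directed edges) and `Ω`
(supported on the bidirected edges and the diagonal), over the formal power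
series ring in the indeterminates `λ_{vw}` (left summand) and `ω_{vw}` (right
summand).  If `A` is the formal power series `(I - Λ)⁻¹ = I + ∑_{k ≥ 1} Λᵏ`
(expressed entrywise: `A i j` is the sum of the series `∑_k (Λᵏ) i j`) and
`Σ = Aᵀ Ω A`, then for all vertices `v, w` the entry `Σ v w` is the sum over
all treks `π` from `v` to `w` of the trek monomial `π(Λ, Ω)`. -/
theorem trek_rule {n : ℕ} (G : MixedGraph n)
    [DecidableRel G.D] [DecidableRel G.B] [DecidableEq (Fin n)]
    (Lam Om : Matrix (Fin n) (Fin n) (MvPowerSeries ((Fin n × Fin n) ⊕ (Fin n × Fin n)) ℚ))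
    (hLam : ∀ i j, Lam i j =
      if G.D i j then MvPowerSeries.X (Sum.inl (i, j)) else 0)
    (hOm : ∀ i j, Om i j =
      if i = j ∨ G.B i j then MvPowerSeries.X (Sum.inr (i, j)) else 0)
    (A : Matrix (Fin n) (Fin n) (MvPowerSeries ((Fin n × Fin n) ⊕ (Fin n × Fin n)) ℚ))
    (hA : ∀ i j, HasSum (fun k : ℕ => (Lam ^ k) i j) (A i j))
    (Sig : Matrix (Fin n) (Fin n) (MvPowerSeries ((Fin n × Fin n) ⊕ (Fin n × Fin n)) ℚ))
    (hSig : Sig = Aᵀ * Om * A) :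
    ∀ v w : Fin n,
      HasSum (fun π : Trek G v w => π.monom (fun i j => Lam i j) (fun i j => Om i j))
        (Sig v w) := by
  classical
  intro v w
  have hWL : ∀ u : Fin n, HasSum (fun W : TrekAux.Walk n v u => TrekAux.wtL Lam W) (A u v) :=
    fun u => TrekAux.hasSum_walkL G Lam hLam A hA u v
  have hWR : ∀ z : Fin n, HasSum (fun W : TrekAux.Walk n z w => TrekAux.wtR Lam W) (A z w) :=
    fun z => TrekAux.hasSum_walkR G Lam hLam A hA z w
  have hbase : HasSum (fun uz : Fin n × Fin n => A uz.1 v * Om uz.1 uz.2 * A uz.2 w)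
      (∑ uz : Fin n × Fin n, A uz.1 v * Om uz.1 uz.2 * A uz.2 w) := hasSum_fintype _
  have hval : ∑ uz : Fin n × Fin n, A uz.1 v * Om uz.1 uz.2 * A uz.2 w = Sig v w := by
    rw [hSig, Matrix.mul_apply]
    simp only [Matrix.mul_apply, Matrix.transpose_apply, Finset.sum_mul]
    rw [Fintype.sum_prod_type]
    exact Finset.sum_comm
  have hsig : HasSum (fun x : TrekAux.Jty n v w => TrekAux.Fm Lam Om x) (Sig v w) := by
    rw [← hval]
    refine TrekAux.hasSum_sigma_ps (TrekAux.fin_Fm G Lam Om hLam)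
      (fun d => Set.toFinite _) ?_ hbase
    intro uz
    have hprod := TrekAux.hasSum_mul_ps (TrekAux.fin_wtL G Lam hLam uz.1 v)
      (TrekAux.fin_wtR G Lam hLam uz.2 w) (hWL uz.1) (hWR uz.2)
    have hc := TrekAux.hasSum_const_mul_ps (Om uz.1 uz.2) hprod
    have heq : A uz.1 v * Om uz.1 uz.2 * A uz.2 w
        = Om uz.1 uz.2 * (A uz.1 v * A uz.2 w) := by ring
    rw [heq]
    show HasSum (fun pr : TrekAux.Walk n v uz.1 × TrekAux.Walk n uz.2 w =>
      Om uz.1 uz.2 * TrekAux.wtL Lam pr.1 * TrekAux.wtR Lam pr.2) _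
    simpa only [mul_assoc] using hc
  have hvan : ∀ x : TrekAux.Jty n v w, x ∉ Set.range (TrekAux.Φ G (v := v) (w := w)) →
      TrekAux.Fm Lam Om x = 0 := by
    intro x hx
    by_contra hne
    exact hx (TrekAux.Fm_mem_range G Lam Om hLam hOm x hne)
  have hfinal := ((TrekAux.Φ_inj G (v := v) (w := w)).hasSum_iff hvan).mpr hsig
  exact hfinal
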